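/- Let k be a commutative ring, A a Z-graded k-algebra, f₁,…,fₙ ∈ A homogeneous of degree d ≥ 1, h : k[T₁,…,Tₙ] → A the k-algebra morphism sending Tᵢ to fᵢ, and Θ : k[T₁,…,Tₙ] → A[T₁,…,Tₙ,Z] the canonical inclusion (the composite of the coefficient extension k[T] → A[T] with the inclusion A[T] ⊆ A[T,Z]). Then ker(h) = Θ⁻¹( TF_{(Z)}((f₁−T₁Z, …, fₙ−TₙZ)) ), the inertia forms being computed in A[T₁,…,Tₙ,Z] with respect to the ideal (Z). -/

import Mathlib

/-- The ideal of inertia forms (Trägheitsformen) of `I` with respect to `J`. -/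
noncomputable def inertiaForms {R : Type*} [CommRing R] (J I : Ideal R) : Ideal R :=
  ⨆ n : ℕ, I.colon ((J ^ n : Ideal R) : Set R)

/-- The ideal `(f₁ - T₁Z, …, fₙ - TₙZ)` of `A[T₁,…,Tₙ][Z]`. -/
noncomputable def fTZIdeal {A : Type*} [CommRing A] {n : ℕ} (f : Fin n → A) :
    Ideal (Polynomial (MvPolynomial (Fin n) A)) :=
  Ideal.span (Set.range fun i =>
    Polynomial.C (MvPolynomial.C (f i)) - Polynomial.C (MvPolynomial.X i) * Polynomial.X)

open Polynomial MvPolynomial Finset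

section Aux

variable {k A : Type*} [CommRing k] [CommRing A] [Algebra k A] {n : ℕ} (f : Fin n → A)

private lemma mk_gen (i : Fin n) :
    Ideal.Quotient.mk (fTZIdeal f) (Polynomial.C (MvPolynomial.X i) * Polynomial.X)
      = Ideal.Quotient.mk (fTZIdeal f) (Polynomial.C (MvPolynomial.C (f i))) := by
  rw [Ideal.Quotient.eq]
  have h : Polynomial.C (MvPolynomial.C (f i)) - Polynomial.C (MvPolynomial.X i) * Polynomial.X
      ∈ fTZIdeal f := Ideal.subset_span ⟨i, rfl⟩
  have := neg_mem h
  rwa [neg_sub] at this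

set_option maxHeartbeats 1000000 in
private lemma mk_monomial (α : Fin n →₀ ℕ) (c : A) :
    Ideal.Quotient.mk (fTZIdeal f)
        (Polynomial.C (MvPolynomial.monomial α c) * Polynomial.X ^ α.degree)
      = Ideal.Quotient.mk (fTZIdeal f)
        (Polynomial.C (MvPolynomial.C (c * ∏ i ∈ α.support, f i ^ α i))) := by
  have h1 : (Polynomial.C (MvPolynomial.monomial α c) * Polynomial.X ^ α.degree
      : Polynomial (MvPolynomial (Fin n) A))
      = Polynomial.C (MvPolynomial.C c)
        * ∏ i ∈ α.support, (Polynomial.C (MvPolynomial.X i) * Polynomial.X) ^ α i := by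
    rw [MvPolynomial.monomial_eq, Finsupp.prod, Finsupp.degree_apply]
    simp only [map_mul, map_prod, map_pow, mul_pow, Finset.prod_mul_distrib,
      Finset.prod_pow_eq_pow_sum]
    ring
  rw [h1, map_mul, map_prod]
  have h2 : ∀ i ∈ α.support,
      Ideal.Quotient.mk (fTZIdeal f) ((Polynomial.C (MvPolynomial.X i) * Polynomial.X) ^ α i)
      = Ideal.Quotient.mk (fTZIdeal f) ((Polynomial.C (MvPolynomial.C (f i))) ^ α i) := by
    intro i _
    rw [map_pow, map_pow, mk_gen]
  rw [Finset.prod_congr rfl h2, ← map_prod, ← map_mul]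
  congr 1
  simp only [map_mul, map_prod, map_pow]

set_option maxHeartbeats 1000000 in
private lemma mk_homog (φ : MvPolynomial (Fin n) A) (j : ℕ) (hφ : φ.IsHomogeneous j) :
    Ideal.Quotient.mk (fTZIdeal f) (Polynomial.C φ * Polynomial.X ^ j)
      = Ideal.Quotient.mk (fTZIdeal f)
          (Polynomial.C (MvPolynomial.C (MvPolynomial.eval f φ))) := by
  conv_lhs => rw [φ.as_sum]
  conv_rhs => rw [φ.as_sum]
  simp only [map_sum, Finset.sum_mul]
  refine Finset.sum_congr rfl fun α hα => ?_
  have hdeg : α.degree = j := by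
    have := hφ (MvPolynomial.mem_support_iff.mp hα)
    rw [Finsupp.degree_eq_weight_one]; exact this
  rw [← hdeg, mk_monomial, MvPolynomial.eval_monomial, Finsupp.prod]

set_option maxHeartbeats 1000000 in
private lemma aeval_mem (𝒜 : ℤ → Submodule k A) [GradedAlgebra 𝒜] (d : ℤ)
    (hf : ∀ i, f i ∈ 𝒜 d) (φ : MvPolynomial (Fin n) k) (j : ℕ) (hφ : φ.IsHomogeneous j) :
    MvPolynomial.aeval f φ ∈ 𝒜 ((j : ℤ) * d) := by
  rw [MvPolynomial.aeval_def, MvPolynomial.eval₂_eq]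
  refine Submodule.sum_mem _ fun α hα => ?_
  have hdeg : α.degree = j := by
    have := hφ (MvPolynomial.mem_support_iff.mp hα)
    rw [Finsupp.degree_eq_weight_one]; exact this
  have hprod : (∏ i ∈ α.support, f i ^ α i) ∈ 𝒜 ((j : ℤ) * d) := by
    have := SetLike.prod_pow_mem_graded (F := α.support) 𝒜 (fun _ => d) f (fun i => α i)
      (fun i _ => hf i)
    have hsum : (∑ i ∈ α.support, (α i) • d) = (j : ℤ) * d := by
      rw [← Finset.sum_smul, ← Finsupp.degree_apply, hdeg]
      simp [nsmul_eq_mul]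
    rwa [hsum] at this
  have := Submodule.smul_mem (𝒜 ((j : ℤ) * d)) (MvPolynomial.coeff α φ) hprod
  rwa [Algebra.smul_def] at this

end Aux

set_option maxHeartbeats 4000000 in
/-- with `h : k[T₁,…,Tₙ] → A`, `Tᵢ ↦ fᵢ`, and
`Θ : k[T₁,…,Tₙ] → A[T₁,…,Tₙ,Z]` the canonical inclusion (coefficient extension followed
by `A[T] ⊆ A[T][Z]`), one has `ker h = Θ⁻¹(TF_{(Z)}((f₁-T₁Z,…,fₙ-TₙZ)))`. -/
theorem statement4 {k A : Type*} [CommRing k] [CommRing A] [Algebra k A]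
    (𝒜 : ℤ → Submodule k A) [GradedAlgebra 𝒜]
    (n : ℕ) (d : ℤ) (hd : 1 ≤ d) (f : Fin n → A) (hf : ∀ i, f i ∈ 𝒜 d) :
    RingHom.ker (MvPolynomial.aeval f : MvPolynomial (Fin n) k →ₐ[k] A)
      = Ideal.comap
          ((Polynomial.C : MvPolynomial (Fin n) A →+* Polynomial (MvPolynomial (Fin n) A)).comp
            (MvPolynomial.map (algebraMap k A)))
          (inertiaForms (Ideal.span {Polynomial.X}) (fTZIdeal f)) := by
  have hd0 : d ≠ 0 := by omega
  ext P
  simp only [RingHom.mem_ker, Ideal.mem_comap, RingHom.comp_apply]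
  set g : k →+* A := algebraMap k A with hg
  constructor
  · -- P(f) = 0 → Θ P ∈ inertia forms
    intro hP
    set N := P.totalDegree with hN
    -- each homogeneous evaluation lies in 𝒜 (j*d)
    have hRmem : ∀ j : ℕ,
        MvPolynomial.aeval f (MvPolynomial.homogeneousComponent j P) ∈ 𝒜 ((j : ℤ) * d) :=
      fun j => aeval_mem f 𝒜 d hf _ j (MvPolynomial.homogeneousComponent_isHomogeneous j P)
    -- the sum of the evaluations is 0
    have hRsum : ∑ j ∈ Finset.range (N + 1),
        MvPolynomial.aeval f (MvPolynomial.homogeneousComponent j P) = 0 := by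
      rw [← map_sum, MvPolynomial.sum_homogeneousComponent, hP]
    -- hence each evaluation is 0, by distinctness of degrees
    have hRzero : ∀ j : ℕ,
        MvPolynomial.aeval f (MvPolynomial.homogeneousComponent j P) = 0 := by
      intro j0
      by_cases hj0 : j0 ∈ Finset.range (N + 1)
      · have key : ((DirectSum.decompose 𝒜 (∑ j ∈ Finset.range (N + 1),
              MvPolynomial.aeval f (MvPolynomial.homogeneousComponent j P)))
            ((j0 : ℤ) * d) : A)
            = MvPolynomial.aeval f (MvPolynomial.homogeneousComponent j0 P) := by
          rw [DirectSum.decompose_sum, DFinsupp.finset_sum_apply,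
            AddSubmonoidClass.coe_finset_sum]
          have hterm : ∀ j ∈ Finset.range (N + 1),
              ((DirectSum.decompose 𝒜
                  (MvPolynomial.aeval f (MvPolynomial.homogeneousComponent j P)))
                ((j0 : ℤ) * d) : A)
              = if j = j0 then MvPolynomial.aeval f (MvPolynomial.homogeneousComponent j P)
                else 0 := by
            intro j _
            by_cases hjj : j = j0
            · subst hjj
              rw [DirectSum.decompose_of_mem_same 𝒜 (hRmem j), if_pos rfl]
            · rw [DirectSum.decompose_of_mem_ne 𝒜 (hRmem j), if_neg hjj]
              intro h
              exact hjj (Nat.cast_injective (mul_right_cancel₀ hd0 h))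
          rw [Finset.sum_congr rfl hterm, Finset.sum_ite_eq' _ j0, if_pos hj0]
        rw [hRsum] at key
        simpa using key.symm
      · have hlt : N < j0 := by simpa [Nat.lt_succ_iff] using hj0
        rw [MvPolynomial.homogeneousComponent_eq_zero _ _ hlt, map_zero]
    -- now show Θ P * X^N ∈ fTZIdeal f
    have hPA : (MvPolynomial.map g P : MvPolynomial (Fin n) A)
        = ∑ j ∈ Finset.range (N + 1),
            MvPolynomial.map g (MvPolynomial.homogeneousComponent j P) := by
      rw [← map_sum, MvPolynomial.sum_homogeneousComponent]
    have hmem : Polynomial.C (MvPolynomial.map g P) * Polynomial.X ^ N ∈ fTZIdeal f := by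
      rw [← Ideal.Quotient.eq_zero_iff_mem, hPA, map_sum, Finset.sum_mul, map_sum]
      refine Finset.sum_eq_zero fun j hj => ?_
      have hjN : j ≤ N := Nat.lt_succ_iff.mp (Finset.mem_range.mp hj)
      have hsplit : Polynomial.C (MvPolynomial.map g (MvPolynomial.homogeneousComponent j P))
            * Polynomial.X ^ N
          = Polynomial.C (MvPolynomial.map g (MvPolynomial.homogeneousComponent j P))
            * Polynomial.X ^ j * Polynomial.X ^ (N - j) := by
        rw [mul_assoc, ← pow_add, Nat.add_sub_cancel' hjN]
      have hzero : Ideal.Quotient.mk (fTZIdeal f)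
          (Polynomial.C (MvPolynomial.map g (MvPolynomial.homogeneousComponent j P))
            * Polynomial.X ^ j) = 0 := by
        rw [mk_homog f _ j ((MvPolynomial.homogeneousComponent_isHomogeneous j P).map g),
          MvPolynomial.eval_map, ← MvPolynomial.aeval_def, hRzero j]
        simp
      rw [hsplit, map_mul]
      rw [hzero]; exact zero_mul (M₀ := (MvPolynomial (Fin n) A)[X] ⧸ fTZIdeal f) _
    -- conclude membership in the inertia forms
    refine Submodule.mem_iSup_of_mem N ?_
    rw [Submodule.mem_colon]
    intro p hp
    rw [Ideal.span_singleton_pow, SetLike.mem_coe, Ideal.mem_span_singleton'] at hp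
    obtain ⟨t, rfl⟩ := hp
    have hre : Polynomial.C (MvPolynomial.map g P) • (t * Polynomial.X ^ N)
        = t * (Polynomial.C (MvPolynomial.map g P) * Polynomial.X ^ N) := by
      rw [smul_eq_mul]; ring
    rw [hre]
    exact Ideal.mul_mem_left _ _ hmem
  · -- Θ P ∈ inertia forms → P(f) = 0
    intro hP
    have hdir : Directed (· ≤ ·)
        (fun m : ℕ => (fTZIdeal f).colon
          ((Ideal.span {(Polynomial.X : Polynomial (MvPolynomial (Fin n) A))} ^ m : Ideal _) : Set _)) := by
      refine Monotone.directed_le fun a b hab => ?_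
      exact Submodule.colon_mono le_rfl (Ideal.pow_le_pow_right hab)
    rw [inertiaForms, Submodule.mem_iSup_of_directed _ hdir] at hP
    obtain ⟨m, hm⟩ := hP
    have hXm : (Polynomial.X : Polynomial (MvPolynomial (Fin n) A)) ^ m
        ∈ Ideal.span {(Polynomial.X : Polynomial (MvPolynomial (Fin n) A))} ^ m :=
      Ideal.pow_mem_pow (Ideal.mem_span_singleton_self _) m
    have hI : Polynomial.C (MvPolynomial.map g P) * Polynomial.X ^ m ∈ fTZIdeal f := by
      have := Submodule.mem_colon.mp hm _ hXm
      rwa [smul_eq_mul] at this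
    set ev : Polynomial (MvPolynomial (Fin n) A) →+* A :=
      Polynomial.eval₂RingHom (MvPolynomial.eval f) 1 with hev
    have hker : fTZIdeal f ≤ RingHom.ker ev := by
      rw [fTZIdeal, Ideal.span_le]
      rintro _ ⟨i, rfl⟩
      simp [hev, RingHom.mem_ker]
    have h0 : ev (Polynomial.C (MvPolynomial.map g P) * Polynomial.X ^ m) = 0 := hker hI
    rw [map_mul, map_pow] at h0
    simp only [hev, coe_eval₂RingHom, Polynomial.eval₂_C, Polynomial.eval₂_X, one_pow,
      mul_one] at h0
    rwa [MvPolynomial.eval_map, ← MvPolynomial.aeval_def] at h0
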